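/- Let G be a finite simple connected graph on n vertices with Laplacian L whose eigenvalues are 0 = σ₁ ≤ σ₂ ≤ … ≤ σₙ, and let M be the Moore–Penrose pseudoinverse of L. Then R_tot = n · tr(M) = n · Σ_{i=2}^{n} 1/σ_i. -/

import Mathlib

open Matrix Finset

/-- `M` is the Moore–Penrose pseudoinverse of `S`: `S M S = S`, `M S M = M`, and both `S M`
and `M S` are symmetric. -/
def IsMoorePenrose {n : Type*} [Fintype n] (S M : Matrix n n ℝ) : Prop :=
  S * M * S = S ∧ M * S * M = M ∧ (S * M).IsSymm ∧ (M * S).IsSymm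

/-- The effective resistance `R_{u,v} = (1_u − 1_v)ᵀ (L + (1/n)J)⁻¹ (1_u − 1_v)`. -/
noncomputable def effRes {V : Type*} [Fintype V] [DecidableEq V] (G : SimpleGraph V)
    [DecidableRel G.Adj] (u v : V) : ℝ :=
  (Pi.single u 1 - Pi.single v 1) ⬝ᵥ
    ((G.lapMatrix ℝ + ((Fintype.card V : ℝ))⁻¹ • Matrix.of (fun _ _ : V => (1 : ℝ)))⁻¹ *ᵥ
      (Pi.single u 1 - Pi.single v 1))

/-- The total resistance `R_tot`: the sum of `R_{u,v}` over unordered pairs of distinct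
vertices, i.e. half the sum over ordered pairs of distinct vertices. -/
noncomputable def totalRes {V : Type*} [Fintype V] [DecidableEq V] (G : SimpleGraph V)
    [DecidableRel G.Adj] : ℝ :=
  (∑ p ∈ Finset.univ.offDiag, effRes G p.1 p.2) / 2

/-- Uniqueness of the Moore–Penrose pseudoinverse. -/
lemma mp_unique {n : Type*} [Fintype n] {S M M' : Matrix n n ℝ}
    (h : IsMoorePenrose S M) (h' : IsMoorePenrose S M') : M = M' := by
  obtain ⟨h1, h2, h3, h4⟩ := h
  obtain ⟨h1', h2', h3', h4'⟩ := h'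
  have a1 : S * M = (S * M') * (S * M) := by rw [← mul_assoc, h1']
  have a2 : (S * M) * (S * M') = S * M' := by rw [← mul_assoc, h1]
  have e1 : S * M = S * M' := by
    calc S * M = (S * M') * (S * M) := a1
      _ = (S * M')ᵀ * (S * M)ᵀ := by rw [h3.eq, h3'.eq]
      _ = ((S * M) * (S * M'))ᵀ := (transpose_mul _ _).symm
      _ = (S * M')ᵀ := by rw [a2]
      _ = S * M' := h3'.eq
  have b1 : M * S = (M * S) * (M' * S) := by
    rw [mul_assoc, ← mul_assoc S M' S, h1']
  have b2 : (M' * S) * (M * S) = M' * S := by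
    rw [mul_assoc, ← mul_assoc S M S, h1]
  have e2 : M * S = M' * S := by
    calc M * S = (M * S) * (M' * S) := b1
      _ = (M * S)ᵀ * (M' * S)ᵀ := by rw [h4.eq, h4'.eq]
      _ = ((M' * S) * (M * S))ᵀ := (transpose_mul _ _).symm
      _ = (M' * S)ᵀ := by rw [b2]
      _ = M' * S := h4'.eq
  calc M = M * S * M := h2.symm
    _ = M' * S * M := by rw [e2]
    _ = M' * (S * M') := by rw [mul_assoc, e1]
    _ = M' := by rw [← mul_assoc, h2']

section spec
variable {n : Type*} [Fintype n] [DecidableEq n] {A : Matrix n n ℝ} (hA : A.IsHermitian)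

/-- The spectral pseudoinverse of a real symmetric matrix. -/
noncomputable def mpSpec : Matrix n n ℝ :=
  (hA.eigenvectorUnitary : Matrix n n ℝ) * diagonal (fun i => (hA.eigenvalues i)⁻¹) *
    star (hA.eigenvectorUnitary : Matrix n n ℝ)

lemma mp_spec_isMP : IsMoorePenrose A (mpSpec hA) := by
  set U : Matrix n n ℝ := (hA.eigenvectorUnitary : Matrix n n ℝ) with hU
  have hUs : U * star U = 1 := (Matrix.mem_unitaryGroup_iff).mp (hA.eigenvectorUnitary).2
  have hsU : star U * U = 1 := (Matrix.mem_unitaryGroup_iff').mp (hA.eigenvectorUnitary).2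
  have hspec : A = U * diagonal hA.eigenvalues * star U := by
    have := hA.spectral_theorem
    rwa [RCLike.ofReal_real_eq_id, Function.id_comp] at this
  set D : Matrix n n ℝ := diagonal hA.eigenvalues with hD
  set D' : Matrix n n ℝ := diagonal (fun i => (hA.eigenvalues i)⁻¹) with hD'
  have key : ∀ E F : Matrix n n ℝ, (U * E * star U) * (U * F * star U) = U * (E * F) * star U := by
    intro E F
    calc (U * E * star U) * (U * F * star U)
        = U * E * (star U * U) * (F * star U) := by noncomm_ring
      _ = U * (E * F) * star U := by rw [hsU, mul_one]; noncomm_ring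
  have hDD'D : D * D' * D = D := by
    rw [hD, hD', diagonal_mul_diagonal, diagonal_mul_diagonal]
    refine congrArg diagonal (funext fun i => ?_)
    rcases eq_or_ne (hA.eigenvalues i) 0 with h | h
    · simp [h]
    · rw [mul_inv_cancel₀ h, one_mul]
  have hD'DD' : D' * D * D' = D' := by
    rw [hD, hD', diagonal_mul_diagonal, diagonal_mul_diagonal]
    refine congrArg diagonal (funext fun i => ?_)
    rcases eq_or_ne (hA.eigenvalues i) 0 with h | h
    · simp [h]
    · rw [inv_mul_cancel₀ h, one_mul]
  have hM : mpSpec hA = U * D' * star U := rfl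
  have hsymm : ∀ E : Matrix n n ℝ, E.IsSymm → (U * E * star U).IsSymm := by
    intro E hE
    have : star U = Uᵀ := by
      rw [← conjTranspose_eq_transpose_of_trivial]; rfl
    rw [Matrix.IsSymm, transpose_mul, transpose_mul, hE.eq, this, transpose_transpose]
    noncomm_ring
  refine ⟨?_, ?_, ?_, ?_⟩
  · rw [hM, hspec, key, key, hDD'D]
  · rw [hM, hspec, key, key, hD'DD']
  · rw [hM, hspec, key]
    exact hsymm _ (by rw [hD, hD', diagonal_mul_diagonal]; exact isSymm_diagonal _)
  · rw [hM, hspec, key]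
    exact hsymm _ (by rw [hD, hD', diagonal_mul_diagonal]; exact isSymm_diagonal _)

lemma mp_spec_trace : (mpSpec hA).trace = ∑ i, (hA.eigenvalues i)⁻¹ := by
  set U : Matrix n n ℝ := (hA.eigenvectorUnitary : Matrix n n ℝ) with hU
  have hsU : star U * U = 1 := (Matrix.mem_unitaryGroup_iff').mp (hA.eigenvectorUnitary).2
  have hM : mpSpec hA = U * diagonal (fun i => (hA.eigenvalues i)⁻¹) * star U := rfl
  rw [hM, Matrix.trace_mul_comm, ← mul_assoc, hsU, one_mul, trace_diagonal]

end spec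

/-- for a connected graph `G` on `n` vertices with Laplacian `L` whose
eigenvalues listed in increasing order (with multiplicity) are `0 = σ₁ ≤ σ₂ ≤ … ≤ σₙ`
(encoded by a monotone `σ : Fin n → ℝ` that is a rearrangement of the eigenvalues of the
Hermitian matrix `L`), and `M` the Moore–Penrose pseudoinverse of `L`,
`R_tot = n · tr(M) = n · Σ_{i=2}^{n} 1/σ_i`. -/
theorem total_resistance_eq_trace_pinv {V : Type*} [Fintype V] [DecidableEq V]
    (G : SimpleGraph V) [DecidableRel G.Adj]
    (hconn : G.Connected) (hcard : 2 ≤ Fintype.card V)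
    (hL : (G.lapMatrix ℝ).IsHermitian)
    (σ : Fin (Fintype.card V) → ℝ) (hmono : Monotone σ)
    (e : V ≃ Fin (Fintype.card V)) (hσ : ∀ w : V, hL.eigenvalues w = σ (e w))
    (M : Matrix V V ℝ) (hM : IsMoorePenrose (G.lapMatrix ℝ) M) :
    totalRes G = (Fintype.card V : ℝ) * M.trace ∧
      (Fintype.card V : ℝ) * M.trace =
        (Fintype.card V : ℝ) *
          ∑ i ∈ Finset.univ.filter (fun i : Fin (Fintype.card V) => (i : ℕ) ≠ 0),
            (σ i)⁻¹ := by
  classical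
  set L : Matrix V V ℝ := G.lapMatrix ℝ with hLdef
  set J : Matrix V V ℝ := Matrix.of (fun _ _ : V => (1:ℝ)) with hJdef
  set c : ℝ := ((Fintype.card V : ℝ))⁻¹ with hcdef
  set B : Matrix V V ℝ := L + c • J with hBdef
  have hnpos : (0:ℝ) < (Fintype.card V : ℝ) := by
    have : 0 < Fintype.card V := by omega
    exact_mod_cast this
  have hcn : c * (Fintype.card V : ℝ) = 1 := inv_mul_cancel₀ (ne_of_gt hnpos)
  have hJT : Jᵀ = J := by ext i j; simp [hJdef]
  have hL1 : L *ᵥ (fun _ => (1:ℝ)) = 0 := G.lapMatrix_mulVec_const_eq_zero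
  have hLJ : L * J = 0 := by
    ext i j
    have := congrFun hL1 i
    simpa [mul_apply, hJdef, mulVec, dotProduct] using this
  have hJL : J * L = 0 := by
    have h := congrArg transpose hLJ
    rwa [transpose_mul, (G.isSymm_lapMatrix (R := ℝ)).eq, ← hLdef, hJT, transpose_zero] at h
  have hJJ : J * J = (Fintype.card V : ℝ) • J := by
    ext i j
    simp [mul_apply, hJdef]
  have hBJ : B * J = J := by
    rw [hBdef, add_mul, hLJ, zero_add, smul_mul_assoc, hJJ, smul_smul, hcn, one_smul]
  have hJB : J * B = J := by
    rw [hBdef, mul_add, hJL, zero_add, mul_smul_comm, hJJ, smul_smul, hcn, one_smul]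
  have hdet : B.det ≠ 0 := by
    intro h
    obtain ⟨x, hx0, hx⟩ := Matrix.exists_mulVec_eq_zero_iff.mpr h
    have hq0 : (0:ℝ) ≤ x ⬝ᵥ (L *ᵥ x) := by
      have := (G.posSemidef_lapMatrix ℝ).dotProduct_mulVec_nonneg x
      simpa using this
    have hJx : x ⬝ᵥ (J *ᵥ x) = (∑ i, x i) ^ 2 := by
      simp [mulVec, dotProduct, hJdef, Finset.sum_mul, sq]
    have hexp : x ⬝ᵥ (B *ᵥ x) = x ⬝ᵥ (L *ᵥ x) + c * (∑ i, x i) ^ 2 := by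
      rw [hBdef, add_mulVec, dotProduct_add, smul_mulVec, dotProduct_smul, hJx,
        smul_eq_mul]
    have h0 : x ⬝ᵥ (L *ᵥ x) + c * (∑ i, x i) ^ 2 = 0 := by
      rw [← hexp, hx, dotProduct_zero]
    have hcpos : 0 < c := by rw [hcdef]; positivity
    have hs2 : (0:ℝ) ≤ c * (∑ i, x i) ^ 2 := by positivity
    have hq : x ⬝ᵥ (L *ᵥ x) = 0 := by linarith
    have hsum0 : (∑ i, x i) = 0 := by
      have h1 : c * (∑ i, x i) ^ 2 = 0 := by linarith
      have h2 := (mul_eq_zero.mp h1).resolve_left (ne_of_gt hcpos)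
      exact pow_eq_zero_iff (by norm_num) |>.mp h2
    have hconst : ∀ i j : V, x i = x j := by
      have hz : Matrix.toLinearMap₂' ℝ (G.lapMatrix ℝ) x x = 0 := by
        rw [Matrix.toLinearMap₂'_apply']; exact hq
      intro i j
      exact (G.lapMatrix_toLinearMap₂'_apply'_eq_zero_iff_forall_reachable x).mp hz i j
        (hconn.preconnected i j)
    have hzero : ∀ i, x i = 0 := by
      intro i
      have hsum : (∑ j, x j) = (Fintype.card V : ℝ) * x i := by
        rw [Finset.sum_congr rfl (fun j _ => hconst j i)]
        simp [Finset.card_univ, mul_comm]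
      have h3 := hsum0 ▸ hsum
      exact (mul_eq_zero.mp h3.symm).resolve_left (ne_of_gt hnpos)
    exact hx0 (funext hzero)
  have hBu : IsUnit B.det := isUnit_iff_ne_zero.mpr hdet
  have hBiB : B⁻¹ * B = 1 := Matrix.nonsing_inv_mul B hBu
  have hBBi : B * B⁻¹ = 1 := Matrix.mul_nonsing_inv B hBu
  have hJBi : J * B⁻¹ = J := by
    calc J * B⁻¹ = (J * B) * B⁻¹ := by rw [hJB]
      _ = J * (B * B⁻¹) := by rw [mul_assoc]
      _ = J := by rw [hBBi, mul_one]
  have hBiJ : B⁻¹ * J = J := by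
    calc B⁻¹ * J = B⁻¹ * (B * J) := by rw [hBJ]
      _ = (B⁻¹ * B) * J := by rw [← mul_assoc]
      _ = J := by rw [hBiB, one_mul]
  set M₀ : Matrix V V ℝ := B⁻¹ - c • J with hM₀def
  have hJM₀ : J * M₀ = 0 := by
    rw [hM₀def, mul_sub, hJBi, mul_smul_comm, hJJ, smul_smul, hcn, one_smul, sub_self]
  have hM₀J : M₀ * J = 0 := by
    rw [hM₀def, sub_mul, hBiJ, smul_mul_assoc, hJJ, smul_smul, hcn, one_smul, sub_self]
  have hLeq : L = B - c • J := by rw [hBdef, add_sub_cancel_right]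
  have hccn : c • c • ((Fintype.card V : ℝ) • J) = c • J := by
    rw [smul_smul, smul_smul, mul_assoc, hcn, mul_one]
  have hLM₀ : L * M₀ = 1 - c • J := by
    rw [hLeq, hM₀def, sub_mul, mul_sub, mul_sub, hBBi, mul_smul_comm, hBJ,
      smul_mul_assoc, hJBi, smul_mul_assoc, mul_smul_comm, hJJ, hccn]
    abel
  have hM₀L : M₀ * L = 1 - c • J := by
    rw [hLeq, hM₀def, sub_mul, mul_sub, mul_sub, hBiB, mul_smul_comm, hBiJ,
      smul_mul_assoc, hJB, smul_mul_assoc, mul_smul_comm, hJJ, hccn]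
    abel
  have hMP₀ : IsMoorePenrose L M₀ := by
    refine ⟨?_, ?_, ?_, ?_⟩
    · rw [hLM₀, sub_mul, one_mul, smul_mul_assoc, hJL, smul_zero, sub_zero]
    · rw [hM₀L, sub_mul, one_mul, smul_mul_assoc, hJM₀, smul_zero, sub_zero]
    · rw [hLM₀, Matrix.IsSymm, transpose_sub, transpose_one, transpose_smul, hJT]
    · rw [hM₀L, Matrix.IsSymm, transpose_sub, transpose_one, transpose_smul, hJT]
  have hMM₀ : M = M₀ := mp_unique hM hMP₀
  have hBi : B⁻¹ = M + c • J := by rw [hMM₀, hM₀def, sub_add_cancel]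
  have hMJ : M * J = 0 := by rw [hMM₀]; exact hM₀J
  have hJM : J * M = 0 := by rw [hMM₀]; exact hJM₀
  have hMrow : ∀ u, ∑ v, M u v = 0 := by
    intro u
    have := congrFun (congrFun hMJ u) u
    simpa [mul_apply, hJdef] using this
  have hMcol : ∀ u, ∑ v, M v u = 0 := by
    intro u
    have := congrFun (congrFun hJM u) u
    simpa [mul_apply, hJdef] using this
  have hBexp : (G.lapMatrix ℝ + ((Fintype.card V : ℝ))⁻¹ • Matrix.of (fun _ _ : V => (1 : ℝ)))
      = B := rfl
  have heff : ∀ u v : V, effRes G u v = M u u + M v v - M u v - M v u := by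
    intro u v
    unfold effRes
    rw [hBexp, hBi, add_mulVec, dotProduct_add, smul_mulVec, dotProduct_smul]
    have hJx : J *ᵥ (Pi.single u 1 - Pi.single v 1) = 0 := by
      ext i
      simp [mulVec, dotProduct, hJdef, Finset.sum_sub_distrib, Finset.sum_pi_single']
    rw [hJx, dotProduct_zero, smul_zero, add_zero, mulVec_sub, sub_dotProduct,
      dotProduct_sub, dotProduct_sub, mulVec_single, mulVec_single]
    simp [single_dotProduct]
    ring
  have hdiag : ∀ u, effRes G u u = 0 := fun u => by rw [heff]; ring
  have htrace : M.trace = ∑ u, M u u := rfl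
  have hsum1 : ∑ p ∈ univ.offDiag, effRes G p.1 p.2 = ∑ p ∈ univ ×ˢ univ, effRes G p.1 p.2 := by
    refine Finset.sum_subset (fun p _ => mem_product.mpr ⟨mem_univ _, mem_univ _⟩)
      (fun p _ hnp => ?_)
    have hpp : p.1 = p.2 := by
      by_contra hne
      exact hnp (Finset.mem_offDiag.mpr ⟨mem_univ _, mem_univ _, hne⟩)
    rw [← hpp, hdiag]
  have hgrid : ∑ p ∈ univ ×ˢ univ, effRes G p.1 p.2
      = 2 * ((Fintype.card V : ℝ) * M.trace) := by
    rw [Finset.sum_product]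
    have hrowsum : ∀ u, ∑ v, (M u u + M v v - M u v - M v u)
        = (Fintype.card V : ℝ) * M u u + M.trace := by
      intro u
      rw [Finset.sum_sub_distrib, Finset.sum_sub_distrib, Finset.sum_add_distrib,
        Finset.sum_const, card_univ, hMrow u, hMcol u, htrace, nsmul_eq_mul]
      ring
    calc ∑ u, ∑ v, effRes G u v = ∑ u, ∑ v, (M u u + M v v - M u v - M v u) := by
          refine Finset.sum_congr rfl fun u _ => Finset.sum_congr rfl fun v _ => heff u v
      _ = ∑ u, ((Fintype.card V : ℝ) * M u u + M.trace) := by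
          exact Finset.sum_congr rfl fun u _ => hrowsum u
      _ = 2 * ((Fintype.card V : ℝ) * M.trace) := by
          rw [Finset.sum_add_distrib, ← Finset.mul_sum, Finset.sum_const, card_univ,
            ← htrace, nsmul_eq_mul]
          ring
  have hpart1 : totalRes G = (Fintype.card V : ℝ) * M.trace := by
    rw [totalRes, hsum1, hgrid]
    ring
  -- Part 2
  have hσ0 : ∀ i : Fin (Fintype.card V), (i : ℕ) = 0 → σ i = 0 := by
    intro i hi
    obtain ⟨i0⟩ : Nonempty V := Fintype.card_pos_iff.mp (by omega)
    have hone : (fun _ : V => (1:ℝ)) ≠ 0 := by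
      intro h
      have := congrFun h i0
      norm_num at this
    have hdetL : (G.lapMatrix ℝ).det = 0 :=
      Matrix.exists_mulVec_eq_zero_iff.mp ⟨fun _ => (1:ℝ), hone, hL1⟩
    have hprod : ∏ w, hL.eigenvalues w = 0 := by
      have := hL.det_eq_prod_eigenvalues
      rw [hdetL] at this
      exact_mod_cast this.symm
    obtain ⟨w, _, hw⟩ := Finset.prod_eq_zero_iff.mp hprod
    have hle : σ i ≤ σ (e w) := hmono (by rw [Fin.le_def, hi]; exact Nat.zero_le _)
    have hnn : 0 ≤ σ i := by
      have h1 := (G.posSemidef_lapMatrix ℝ).eigenvalues_nonneg (e.symm i)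
      have h2 : hL.eigenvalues (e.symm i) = σ i := by rw [hσ, Equiv.apply_symm_apply]
      rw [← h2]
      exact h1
    have : σ (e w) = 0 := by rw [← hσ, hw]
    linarith
  have htr : M.trace = ∑ i, (σ i)⁻¹ := by
    have h1 : M = mpSpec hL := mp_unique hM (mp_spec_isMP hL)
    rw [h1, mp_spec_trace]
    simp_rw [hσ]
    exact Fintype.sum_equiv e _ _ (fun w => rfl)
  have hfilter : ∑ i ∈ Finset.univ.filter (fun i : Fin (Fintype.card V) => (i : ℕ) ≠ 0),
      (σ i)⁻¹ = ∑ i, (σ i)⁻¹ := by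
    rw [Finset.sum_filter]
    refine Finset.sum_congr rfl fun i _ => ?_
    by_cases h : (i : ℕ) = 0
    · simp [h, hσ0 i h]
    · simp [h]
  exact ⟨hpart1, by rw [htr, hfilter]⟩
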